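/- Axiom D5 (reversibility) is sound in causal models with constraints: for any model M, context u, distinct endogenous variables W, Y not in X, and Z = V \ (X ∪ {W, Y}), if (M, u) ⊨ ⟨X ← x, Y ← y⟩(W = w ∧ Z = z) and (M, u) ⊨ ⟨X ← x, W ← w⟩(Y = y ∧ Z = z), then (M, u) ⊨ ⟨X ← x⟩(W = w ∧ Y = y ∧ Z = z). -/

import Mathlib

/-- A signature: exogenous variables, endogenous variables, and their ranges. -/
structure Sig where
  EU : Type
  EV : Type
  ValU : EU → Type
  ValV : EV → Type

/-- A context: an assignment of values to the exogenous variables. -/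
abbrev Sig.Ctx (S : Sig) := ∀ u : S.EU, S.ValU u

/-- A state: an assignment of values to the endogenous variables. -/
abbrev Sig.State (S : Sig) := ∀ X : S.EV, S.ValV X

/-- A structural equation for `X`: a function of the context and the values of
all variables other than `X`, returning a value for `X`. -/
abbrev Eqn (S : Sig) (X : S.EV) :=
  S.Ctx → (∀ Z : S.EV, Z ≠ X → S.ValV Z) → S.ValV X

/-- A causal model with constraints: a partial family of structural equations
together with a set `C` of admissible extended states. -/
structure CMC (S : Sig) where
  F : ∀ X : S.EV, Option (Eqn S X)
  C : Set (S.Ctx × S.State)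

/-- An intervention: a partial assignment of values to endogenous variables. -/
abbrev Intervention (S : Sig) := ∀ X : S.EV, Option (S.ValV X)

variable {S : Sig}

/-- `(u, v)` satisfies all the (defined) equations in the family `F`. -/
def satEq (F : ∀ X : S.EV, Option (Eqn S X)) (u : S.Ctx) (v : S.State) : Prop :=
  ∀ (X : S.EV) (f : Eqn S X), F X = some f → v X = f u (fun Z _ => v Z)

/-- The model `M_{Y ← y}`: each variable in the domain of `g` gets the
corresponding constant equation; other equations are unchanged. -/
def CMC.intervene (M : CMC S) (g : Intervention S) : CMC S where
  F := fun X => match g X with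
    | some a => some (fun _ _ => a)
    | none => M.F X
  C := M.C

/-- The model `M_{−X}`: the equations of the variables in `D` are removed. -/
def CMC.disconnect (M : CMC S) (D : S.EV → Bool) : CMC S where
  F := fun X => if D X then none else M.F X
  C := M.C

/-- `(M, u) ⊨ [g]φ`: every state `v` with `(u,v) ∈ C` satisfying the equations
of `F_g` satisfies `φ`. -/
def Box (M : CMC S) (u : S.Ctx) (g : Intervention S) (φ : S.State → Prop) : Prop :=
  ∀ v : S.State, (u, v) ∈ M.C → satEq (M.intervene g).F u v → φ v

/-- `(M, u) ⊨ ⟨g⟩φ`, defined as `¬[g]¬φ`. -/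
def Dia (M : CMC S) (u : S.Ctx) (g : Intervention S) (φ : S.State → Prop) : Prop :=
  ¬ Box M u g (fun v => ¬ φ v)

/-- Extend an intervention by additionally setting `X ← a`. -/
def iupd [DecidableEq S.EV] (g : Intervention S) (X : S.EV) (a : S.ValV X) :
    Intervention S :=
  Function.update g X (some a)

/-- soundness of axiom D5 (reversibility): with `W ≠ Y` both not
intervened by `g` (the intervention `X ← x`), and `z` a setting of the remaining
variables `Z = V \ (X ∪ {W, Y})`, if `(M,u) ⊨ ⟨X ← x, Y ← y⟩(W = w ∧ Z = z)` and
`(M,u) ⊨ ⟨X ← x, W ← w⟩(Y = y ∧ Z = z)` then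
`(M,u) ⊨ ⟨X ← x⟩(W = w ∧ Y = y ∧ Z = z)`. -/
theorem d5_sound [DecidableEq S.EV] (M : CMC S) (u : S.Ctx) (g : Intervention S)
    (W Y : S.EV) (hWY : W ≠ Y) (hW : g W = none) (hY : g Y = none)
    (w : S.ValV W) (y : S.ValV Y) (z : ∀ Z : S.EV, S.ValV Z) :
    Dia M u (iupd g Y y)
      (fun v => v W = w ∧ ∀ Z, g Z = none → Z ≠ W → Z ≠ Y → v Z = z Z) →
    Dia M u (iupd g W w)
      (fun v => v Y = y ∧ ∀ Z, g Z = none → Z ≠ W → Z ≠ Y → v Z = z Z) →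
    Dia M u g
      (fun v => v W = w ∧ v Y = y ∧ ∀ Z, g Z = none → Z ≠ W → Z ≠ Y → v Z = z Z) := by
  intro h1 h2
  simp only [Dia, Box, not_forall, not_not] at h1 h2 ⊢
  obtain ⟨v1, hv1C, hv1E, hv1W, hv1Z⟩ := h1
  obtain ⟨v2, hv2C, hv2E, hv2Y, hv2Z⟩ := h2
  -- effectiveness facts
  have hv1Y : v1 Y = y := by
    have := hv1E Y (fun _ _ => y) (by simp [CMC.intervene, iupd])
    simpa using this
  have hv2W : v2 W = w := by
    have := hv2E W (fun _ _ => w) (by simp [CMC.intervene, iupd])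
    simpa using this
  have heff1 : ∀ (X : S.EV) (a : S.ValV X), g X = some a → v1 X = a := by
    intro X a ha
    have hXY : X ≠ Y := by rintro rfl; rw [hY] at ha; exact (nomatch ha)
    have := hv1E X (fun _ _ => a)
      (by simp [CMC.intervene, iupd, Function.update_of_ne hXY, ha])
    simpa using this
  have heff2 : ∀ (X : S.EV) (a : S.ValV X), g X = some a → v2 X = a := by
    intro X a ha
    have hXW : X ≠ W := by rintro rfl; rw [hW] at ha; exact (nomatch ha)
    have := hv2E X (fun _ _ => a)
      (by simp [CMC.intervene, iupd, Function.update_of_ne hXW, ha])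
    simpa using this
  have heq : v1 = v2 := by
    funext X
    rcases hgX : g X with _ | a
    · by_cases hXW : X = W
      · subst hXW; rw [hv1W, hv2W]
      · by_cases hXY : X = Y
        · subst hXY; rw [hv1Y, hv2Y]
        · rw [hv1Z X hgX hXW hXY, hv2Z X hgX hXW hXY]
    · rw [heff1 X a hgX, heff2 X a hgX]
  refine ⟨v1, hv1C, ?_, hv1W, hv1Y, hv1Z⟩
  intro X f hf
  rcases hgX : g X with _ | a
  · have hfX : M.F X = some f := by
      simpa [CMC.intervene, hgX] using hf
    by_cases hXY : X = Y
    · subst hXY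
      have hYW : X ≠ W := hWY.symm
      have := hv2E X f (by simp [CMC.intervene, iupd, Function.update_of_ne hYW, hgX, hfX])
      rw [heq]; exact this
    · have := hv1E X f
        (by simp [CMC.intervene, iupd, Function.update_of_ne hXY, hgX, hfX])
      exact this
  · have hfa : f = fun _ _ => a := by
      have h' : some f = (some (fun _ _ => a) : Option (Eqn S X)) := by
        simpa [CMC.intervene, hgX] using hf.symm
      exact Option.some.inj h'
    rw [hfa]
    exact heff1 X a hgX
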